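/- The map F(λ) = ∑_{i=1}^n arctan(λᵢ) defined on symmetric matrices via eigenvalues is strictly monotone: if A and B are real symmetric n×n matrices with A ≤ B (i.e., B − A positive semidefinite) and A ≠ B, then F(A) < F(B), where F(A) = ∑ arctan of the eigenvalues of A. -/

import Mathlib

open Real Finset Matrix

variable {n : ℕ}

/-- Quadratic form via eigenvalues. -/
lemma quad_form {A : Matrix (Fin n) (Fin n) ℝ} (hA : A.IsHermitian) (x : Fin n → ℝ) :
    x ⬝ᵥ (A *ᵥ x) = ∑ i, hA.eigenvalues i *
      ((star (hA.eigenvectorUnitary : Matrix (Fin n) (Fin n) ℝ) *ᵥ x) i) ^ 2 := by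
  set U : Matrix (Fin n) (Fin n) ℝ := (hA.eigenvectorUnitary : Matrix (Fin n) (Fin n) ℝ) with hU
  have hstar : star U = Uᵀ := by
    ext i j; simp [Matrix.star_apply]
  set c : Fin n → ℝ := star U *ᵥ x with hc
  conv_lhs => rw [hA.spectral_theorem, Unitary.conjStarAlgAut_apply]
  have hof : (RCLike.ofReal ∘ hA.eigenvalues : Fin n → ℝ) = hA.eigenvalues := by
    ext i; simp
  rw [hof, ← Matrix.mulVec_mulVec, ← Matrix.mulVec_mulVec,
    Matrix.dotProduct_mulVec, ← Matrix.mulVec_transpose, ← hstar, ← hc]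
  simp only [dotProduct, Matrix.mulVec_diagonal]
  exact Finset.sum_congr rfl fun i _ => by ring

lemma norm_form {A : Matrix (Fin n) (Fin n) ℝ} (hA : A.IsHermitian) (x : Fin n → ℝ) :
    ∑ i, ((star (hA.eigenvectorUnitary : Matrix (Fin n) (Fin n) ℝ) *ᵥ x) i) ^ 2
      = x ⬝ᵥ x := by
  set U : Matrix (Fin n) (Fin n) ℝ := (hA.eigenvectorUnitary : Matrix (Fin n) (Fin n) ℝ) with hU
  have hstar : star U = Uᵀ := by ext i j; simp [Matrix.star_apply]
  have h1 : U * star U = 1 := Matrix.mem_unitaryGroup_iff.mp hA.eigenvectorUnitary.2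
  set c : Fin n → ℝ := star U *ᵥ x with hc
  have : ∑ i, (c i) ^ 2 = c ⬝ᵥ c := by
    simp [dotProduct, sq]
  rw [this]
  calc c ⬝ᵥ c = c ⬝ᵥ (star U *ᵥ x) := by rw [← hc]
    _ = (c ᵥ* star U) ⬝ᵥ x := Matrix.dotProduct_mulVec _ _ _
    _ = x ⬝ᵥ x := by
        have hcx : c ᵥ* star U = x := by
          rw [hc, hstar, Matrix.mulVec_transpose, Matrix.vecMul_vecMul, ← hstar, h1,
            Matrix.vecMul_one]
        rw [hcx]

/-- Nonzero solution to an underdetermined system of linear conditions. -/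
lemma exists_common (s t : Finset (Fin n)) (M N : Matrix (Fin n) (Fin n) ℝ)
    (h : sᶜ.card + tᶜ.card < n) :
    ∃ x : Fin n → ℝ, x ≠ 0 ∧ (∀ i ∉ s, (M *ᵥ x) i = 0) ∧ (∀ j ∉ t, (N *ᵥ x) j = 0) := by
  classical
  let L : (Fin n → ℝ) →ₗ[ℝ] ((sᶜ : Finset (Fin n)) → ℝ) × ((tᶜ : Finset (Fin n)) → ℝ) :=
    LinearMap.prod ((LinearMap.funLeft ℝ ℝ Subtype.val).comp M.mulVecLin)
      ((LinearMap.funLeft ℝ ℝ Subtype.val).comp N.mulVecLin)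
  have hdim : Module.finrank ℝ (((sᶜ : Finset (Fin n)) → ℝ) × ((tᶜ : Finset (Fin n)) → ℝ))
      < Module.finrank ℝ (Fin n → ℝ) := by
    rw [Module.finrank_prod, Module.finrank_fintype_fun_eq_card,
      Module.finrank_fintype_fun_eq_card, Module.finrank_fintype_fun_eq_card]
    simp only [Fintype.card_coe, Fintype.card_fin]
    exact h
  have hker : LinearMap.ker L ≠ ⊥ := LinearMap.ker_ne_bot_of_finrank_lt hdim
  obtain ⟨x, hxmem, hx0⟩ := Submodule.exists_mem_ne_zero_of_ne_bot hker
  refine ⟨x, hx0, ?_, ?_⟩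
  · intro i hi
    have := congrFun (congrArg Prod.fst (LinearMap.mem_ker.mp hxmem)) ⟨i, by simpa using hi⟩
    simpa [L] using this
  · intro j hj
    have := congrFun (congrArg Prod.snd (LinearMap.mem_ker.mp hxmem)) ⟨j, by simpa using hj⟩
    simpa [L] using this

/-- Weyl monotonicity: sorted eigenvalues are monotone w.r.t. the Loewner order. -/
lemma weyl {A B : Matrix (Fin n) (Fin n) ℝ} (hA : A.IsHermitian) (hB : B.IsHermitian)
    (hle : ∀ x : Fin n → ℝ, x ⬝ᵥ (A *ᵥ x) ≤ x ⬝ᵥ (B *ᵥ x)) (k : Fin n) :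
    hA.eigenvalues (Tuple.sort hA.eigenvalues k) ≤ hB.eigenvalues (Tuple.sort hB.eigenvalues k) := by
  classical
  set σ := Tuple.sort hA.eigenvalues with hσ
  set τ := Tuple.sort hB.eigenvalues with hτ
  set s : Finset (Fin n) := (Finset.Ici k).image σ with hs
  set t : Finset (Fin n) := (Finset.Iic k).image τ with ht
  have hscard : s.card = n - k := by
    rw [hs, Finset.card_image_of_injective _ σ.injective, Fin.card_Ici]
  have htcard : t.card = k + 1 := by
    rw [ht, Finset.card_image_of_injective _ τ.injective, Fin.card_Iic]
  have hcompl : sᶜ.card + tᶜ.card < n := by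
    have h1 := Finset.card_compl s
    have h2 := Finset.card_compl t
    have hk := k.isLt
    simp only [Fintype.card_fin] at h1 h2
    omega
  obtain ⟨x, hx0, hcs, hct⟩ := exists_common s t
    (star (hA.eigenvectorUnitary : Matrix (Fin n) (Fin n) ℝ))
    (star (hB.eigenvectorUnitary : Matrix (Fin n) (Fin n) ℝ)) hcompl
  set c : Fin n → ℝ := star (hA.eigenvectorUnitary : Matrix (Fin n) (Fin n) ℝ) *ᵥ x with hc
  set d : Fin n → ℝ := star (hB.eigenvectorUnitary : Matrix (Fin n) (Fin n) ℝ) *ᵥ x with hd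
  have hxx : 0 < x ⬝ᵥ x := by
    rcases lt_or_eq_of_le (Finset.sum_nonneg fun i _ => mul_self_nonneg (x i)) with h | h
    · exact h
    · exact absurd (dotProduct_self_eq_zero.mp h.symm) hx0
  have key1 : hA.eigenvalues (σ k) * (x ⬝ᵥ x) ≤ x ⬝ᵥ (A *ᵥ x) := by
    rw [quad_form hA x, ← norm_form hA x, Finset.mul_sum]
    apply Finset.sum_le_sum
    intro i _
    rcases eq_or_ne (c i) 0 with h0 | h0
    · simp [← hc, h0]
    · have his : i ∈ s := by
        by_contra hins
        exact h0 (hcs i hins)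
      obtain ⟨j, hj, rfl⟩ := Finset.mem_image.mp his
      have : hA.eigenvalues (σ k) ≤ hA.eigenvalues (σ j) :=
        Tuple.monotone_sort hA.eigenvalues (Finset.mem_Ici.mp hj)
      exact mul_le_mul_of_nonneg_right this (sq_nonneg _)
  have key2 : x ⬝ᵥ (B *ᵥ x) ≤ hB.eigenvalues (τ k) * (x ⬝ᵥ x) := by
    rw [quad_form hB x, ← norm_form hB x, Finset.mul_sum]
    apply Finset.sum_le_sum
    intro i _
    rcases eq_or_ne (d i) 0 with h0 | h0
    · simp [← hd, h0]
    · have hit : i ∈ t := by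
        by_contra hint
        exact h0 (hct i hint)
      obtain ⟨j, hj, rfl⟩ := Finset.mem_image.mp hit
      have : hB.eigenvalues (τ j) ≤ hB.eigenvalues (τ k) :=
        Tuple.monotone_sort hB.eigenvalues (Finset.mem_Iic.mp hj)
      exact mul_le_mul_of_nonneg_right this (sq_nonneg _)
  have := le_trans key1 (le_trans (hle x) key2)
  exact le_of_mul_le_mul_right this hxx

lemma trace_eq_sum_eigs {A : Matrix (Fin n) (Fin n) ℝ} (hA : A.IsHermitian) :
    A.trace = ∑ i, hA.eigenvalues i := by
  conv_lhs => rw [hA.spectral_theorem, Unitary.conjStarAlgAut_apply]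
  rw [Matrix.trace_mul_cycle, Matrix.mem_unitaryGroup_iff'.mp hA.eigenvectorUnitary.2, one_mul,
    Matrix.trace_diagonal]
  simp

lemma eq_zero_of_eigs_zero {C : Matrix (Fin n) (Fin n) ℝ} (hC : C.IsHermitian)
    (h : ∀ i, hC.eigenvalues i = 0) : C = 0 := by
  have := hC.spectral_theorem
  have hdiag : (RCLike.ofReal ∘ hC.eigenvalues : Fin n → ℝ) = 0 := by
    ext i; simp [h i]
  rw [hdiag] at this
  have hd0 : Matrix.diagonal (0 : Fin n → ℝ) = 0 := by
    ext i j; simp [Matrix.diagonal_apply]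
  rw [Unitary.conjStarAlgAut_apply, hd0, Matrix.mul_zero, Matrix.zero_mul] at this
  exact this

/-- Strict monotonicity of `F(A) = ∑ arctan λᵢ(A)` on symmetric matrices:
if `A ≤ B` (i.e. `B - A` is positive semidefinite) and `A ≠ B`, then `F(A) < F(B)`. -/
theorem stmt_7 (n : ℕ) (A B : Matrix (Fin n) (Fin n) ℝ)
    (hA : A.IsHermitian) (hB : B.IsHermitian)
    (hAB : (B - A).PosSemidef) (hne : A ≠ B) :
    ∑ i, Real.arctan (hA.eigenvalues i) < ∑ i, Real.arctan (hB.eigenvalues i) := by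
  classical
  -- quadratic form monotonicity
  have hle : ∀ x : Fin n → ℝ, x ⬝ᵥ (A *ᵥ x) ≤ x ⬝ᵥ (B *ᵥ x) := by
    intro x
    have h0 := hAB.dotProduct_mulVec_nonneg x
    simp only [star_trivial, Matrix.sub_mulVec, dotProduct_sub] at h0
    linarith [h0]
  -- trace strict inequality
  have htrace : A.trace < B.trace := by
    have hC : (B - A).IsHermitian := hAB.1
    have hnn : ∀ i, 0 ≤ hC.eigenvalues i := fun i => hAB.eigenvalues_nonneg i
    have hCtr : (B - A).trace = ∑ i, hC.eigenvalues i := trace_eq_sum_eigs hC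
    have hpos : 0 < (B - A).trace := by
      rcases lt_or_eq_of_le (Finset.sum_nonneg fun i _ => hnn i) with h | h
      · rwa [hCtr]
      · exfalso
        have hz : ∀ i ∈ Finset.univ, hC.eigenvalues i = 0 :=
          (Finset.sum_eq_zero_iff_of_nonneg fun i _ => hnn i).mp h.symm
        have : B - A = 0 := eq_zero_of_eigs_zero hC fun i => hz i (Finset.mem_univ i)
        exact hne (sub_eq_zero.mp this).symm
    have := Matrix.trace_sub B A
    linarith [this ▸ hpos]
  set σ := Tuple.sort hA.eigenvalues with hσ
  set τ := Tuple.sort hB.eigenvalues with hτ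
  have hWeyl : ∀ k, hA.eigenvalues (σ k) ≤ hB.eigenvalues (τ k) := weyl hA hB hle
  have hsumlt : ∑ k, hA.eigenvalues (σ k) < ∑ k, hB.eigenvalues (τ k) := by
    rw [Equiv.sum_comp σ, Equiv.sum_comp τ, ← trace_eq_sum_eigs hA, ← trace_eq_sum_eigs hB]
    exact htrace
  have hstrict : ∃ k, hA.eigenvalues (σ k) < hB.eigenvalues (τ k) := by
    by_contra hcon
    push_neg at hcon
    have : ∀ k, hA.eigenvalues (σ k) = hB.eigenvalues (τ k) :=
      fun k => le_antisymm (hWeyl k) (hcon k)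
    exact absurd (Finset.sum_congr rfl fun k _ => this k) (ne_of_lt hsumlt)
  obtain ⟨k0, hk0⟩ := hstrict
  calc ∑ i, Real.arctan (hA.eigenvalues i)
      = ∑ k, Real.arctan (hA.eigenvalues (σ k)) :=
        (Equiv.sum_comp σ fun i => Real.arctan (hA.eigenvalues i)).symm
    _ < ∑ k, Real.arctan (hB.eigenvalues (τ k)) := by
        apply Finset.sum_lt_sum
        · exact fun k _ => Real.arctan_strictMono.monotone (hWeyl k)
        · exact ⟨k0, Finset.mem_univ k0, Real.arctan_strictMono hk0⟩
    _ = ∑ i, Real.arctan (hB.eigenvalues i) :=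
        Equiv.sum_comp τ fun i => Real.arctan (hB.eigenvalues i)
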